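/- Let G be a connected countable graph and G' a connected subgraph all of whose boundary vertices have infinite degree. Then for every edge e of G', the finite span Sfin(e) is contained in G'. -/
import Mathlib


/-- The edge `e` is incident to the vertex `v`. -/
def Inc {V E : Type*} (startE endE : E → V) (v : V) (e : E) : Prop :=
  startE e = v ∨ endE e = v

/-- One step of a path of finite weight: the edges `a` and `b` share a vertex of finite
degree (no infinite star is crossed). -/
def FinStep {V E : Type*} (startE endE : E → V) (a b : E) : Prop :=
  ∃ v : V, Inc startE endE v a ∧ Inc startE endE v b ∧
    {f : E | Inc startE endE v f}.Finite

/-- The finite span `Sfin(e)`: the set of edges joined to `e` by a path of finite weight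
(including `e` itself, via the empty path). -/
def Sfin {V E : Type*} (startE endE : E → V) (e : E) : Set E :=
  {e' : E | Relation.ReflTransGen (FinStep startE endE) e e'}

/-- Let `G` be a connected countable graph and `S` (the edge set of) a connected
subgraph all of whose boundary vertices have infinite degree. Then for every edge `e` of `S`,
the finite span `Sfin(e)` is contained in `S`. -/
theorem finite_span_subset_of_infinite_boundary {V E : Type*} [Countable V] [Countable E]
    (startE endE : E → V) (S : Set E)
    (hG : ∀ a b : E, Relation.ReflTransGen
      (fun x y : E => ∃ v : V, Inc startE endE v x ∧ Inc startE endE v y) a b)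
    (hS : ∀ a ∈ S, ∀ b ∈ S, Relation.ReflTransGen
      (fun x y : E => x ∈ S ∧ y ∈ S ∧ ∃ v : V, Inc startE endE v x ∧ Inc startE endE v y) a b)
    (hb : ∀ v : V, (∃ a ∈ S, Inc startE endE v a) → (∃ b ∉ S, Inc startE endE v b) →
      {f : E | Inc startE endE v f}.Infinite) :
    ∀ e ∈ S, Sfin startE endE e ⊆ S := by
  intro e he e' he'
  induction he' with
  | refl => exact he
  | tail _ hstep ih =>
    rename_i b c _
    obtain ⟨v, hva, hvb, hfin⟩ := hstep
    by_contra hc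
    exact (hb v ⟨b, ih, hva⟩ ⟨c, hc, hvb⟩) hfin
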